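/- The metaplectic Demazure–Lusztig operator T̃_a on ℤ_{τ,𝔤}[Y] satisfies the Hecke quadratic relation T̃_a² = (τ²−1)T̃_a + τ², i.e. (T̃_a − τ²)(T̃_a + 1) = 0, where T̃_a acts by: Y_λ̌ · T̃_a = 𝔤_{⟨λ̌+ρ̌,a⟩Q(ǎ)} Y_{λ̌•s_a} + (τ²−1) Σ_{k≥0, kn(ǎ)≤⟨λ̌,a⟩} Y_{λ̌ − kn(ǎ)ǎ} if ⟨λ̌,a⟩ ≥ 0, and Y_λ̌ · T̃_a = 𝔤_{⟨λ̌+ρ̌,a⟩Q(ǎ)} Y_{λ̌•s_a} + (1−τ²) Σ_{k>0, kn(ǎ)<−⟨λ̌,a⟩} Y_{λ̌ + kn(ǎ)ǎ} if ⟨λ̌,a⟩ < 0. -/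

import Mathlib

open Finsupp


open Finsupp

section AuxSums

variable {M : Type*} [AddCommMonoid M]

lemma hsplit (f : ℤ → M) (a b c : ℤ) (h1 : a ≤ b + 1) (h2 : b ≤ c) :
    ∑ j ∈ Finset.Icc a c, f j = ∑ j ∈ Finset.Icc a b, f j + ∑ j ∈ Finset.Icc (b+1) c, f j := by
  have hu : Finset.Icc a c = Finset.Icc a b ∪ Finset.Icc (b+1) c := by
    ext x; simp only [Finset.mem_union, Finset.mem_Icc]; omega
  rw [hu, Finset.sum_union]
  rw [Finset.disjoint_left]
  intro x hx hy
  simp only [Finset.mem_Icc] at hx hy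
  omega

lemma hpop_left (f : ℤ → M) (a b : ℤ) (h : a ≤ b) :
    ∑ j ∈ Finset.Icc a b, f j = f a + ∑ j ∈ Finset.Icc (a+1) b, f j := by
  rw [hsplit f a a b (by omega) h, Finset.Icc_self, Finset.sum_singleton]

lemma hpop_right (f : ℤ → M) (a b : ℤ) (h : a ≤ b) :
    ∑ j ∈ Finset.Icc a b, f j = ∑ j ∈ Finset.Icc a (b-1), f j + f b := by
  rw [hsplit f a (b-1) b (by omega) (by omega), show b - 1 + 1 = b by ring,
    Finset.Icc_self, Finset.sum_singleton]

lemma hshift (f : ℤ → M) (a b d : ℤ) :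
    ∑ i ∈ Finset.Icc a b, f (i + d) = ∑ j ∈ Finset.Icc (a+d) (b+d), f j := by
  refine Finset.sum_nbij' (fun i => i + d) (fun j => j - d) ?_ ?_ ?_ ?_ (fun a ha => rfl) <;>
    simp only [Finset.mem_Icc] <;> intros <;> omega

lemma hrefl (f : ℤ → M) (a b d : ℤ) :
    ∑ i ∈ Finset.Icc a b, f (d - i) = ∑ j ∈ Finset.Icc (d-b) (d-a), f j := by
  refine Finset.sum_nbij' (fun i => d - i) (fun j => d - j) ?_ ?_ ?_ ?_ (fun a ha => rfl) <;>
    simp only [Finset.mem_Icc] <;> intros <;> omega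

end AuxSums

section CL

variable {M : Type*} [AddCommGroup M]

lemma CL1 (f : ℤ → M) (K C : ℤ) (h0 : 0 ≤ C) (h1 : 2*C ≤ K) (h2 : K ≤ 2*C+1) :
    (∑ k ∈ Finset.Icc 0 C, ∑ j ∈ Finset.Icc k (K-k), f j)
      - (∑ k ∈ Finset.Icc (C+1) K, ∑ j ∈ Finset.Icc (K+1-k) (k-1), f j)
    = ∑ j ∈ Finset.Icc 0 K, f j := by
  have hre : (∑ k ∈ Finset.Icc (C+1) K, ∑ j ∈ Finset.Icc (K+1-k) (k-1), f j)
      = ∑ k ∈ Finset.Icc 1 (K-C), ∑ j ∈ Finset.Icc k (K-k), f j := by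
    have h := hrefl (fun k => ∑ j ∈ Finset.Icc (K+1-k) (k-1), f j) 1 (K-C) (K+1)
    rw [show K+1-(K-C) = C+1 by ring, show K+1-1 = K by ring] at h
    rw [← h]
    refine Finset.sum_congr rfl fun i _ => ?_
    refine Finset.sum_congr ?_ fun j _ => rfl
    have e1 : K+1-(K+1-i) = i := by omega
    have e2 : K+1-i-1 = K-i := by omega
    rw [e1, e2]
  rw [hre]
  rw [hpop_left (fun k => ∑ j ∈ Finset.Icc k (K-k), f j) 0 C h0]
  rcases (by omega : K = 2*C ∨ K = 2*C + 1) with hK | hK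
  · rw [show K - C = C by omega, show K - 0 = K by ring, show (0:ℤ)+1 = 1 by ring]
    abel
  · rw [show K - C = C+1 by omega, show K - 0 = K by ring, show (0:ℤ)+1 = 1 by ring]
    rw [hpop_right (fun k => ∑ j ∈ Finset.Icc k (K-k), f j) 1 (C+1) (by omega)]
    rw [show C+1-1 = C by ring, show Finset.Icc (C+1) (K-(C+1)) = ∅ by
      apply Finset.Icc_eq_empty; omega]
    simp

lemma CL2 (f : ℤ → M) (N C2 : ℤ) (hN : 0 ≤ N) (h1 : N+1 ≤ 2*C2) (h2 : 2*C2 ≤ N+2) :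
    (∑ k ∈ Finset.Icc C2 N, ∑ j ∈ Finset.Icc (N+1-k) k, f j)
      - (∑ k ∈ Finset.Icc 1 (C2-1), ∑ j ∈ Finset.Icc (k+1) (N-k), f j)
    = ∑ j ∈ Finset.Icc 1 N, f j := by
  have hre : (∑ k ∈ Finset.Icc C2 N, ∑ j ∈ Finset.Icc (N+1-k) k, f j)
      = ∑ k ∈ Finset.Icc 1 (N+1-C2), ∑ j ∈ Finset.Icc k (N+1-k), f j := by
    have h := hrefl (fun k => ∑ j ∈ Finset.Icc (N+1-k) k, f j) 1 (N+1-C2) (N+1)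
    rw [show N+1-(N+1-C2) = C2 by ring, show N+1-1 = N by ring] at h
    rw [← h]
    refine Finset.sum_congr rfl fun i _ => ?_
    refine Finset.sum_congr ?_ fun j _ => rfl
    have e1 : N+1-(N+1-i) = i := by omega
    have e2 : N+1-i-1 = N+1-i-1 := rfl
    rw [e1]
  have hsh : (∑ k ∈ Finset.Icc 1 (C2-1), ∑ j ∈ Finset.Icc (k+1) (N-k), f j)
      = ∑ k ∈ Finset.Icc 2 C2, ∑ j ∈ Finset.Icc k (N+1-k), f j := by
    have h := hshift (fun k => ∑ j ∈ Finset.Icc k (N+1-k), f j) 1 (C2-1) 1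
    rw [show (1:ℤ)+1 = 2 by ring, show C2-1+1 = C2 by ring] at h
    rw [← h]
    refine Finset.sum_congr rfl fun i _ => ?_
    refine Finset.sum_congr ?_ fun j _ => rfl
    have e1 : N - i = N+1-(i+1) := by omega
    rw [e1]
  rw [hre, hsh]
  rcases (by omega : 2*C2 = N+1 ∨ 2*C2 = N+2) with hC | hC
  · rw [show N+1-C2 = C2 by omega]
    rw [hpop_left (fun k => ∑ j ∈ Finset.Icc k (N+1-k), f j) 1 C2 (by omega)]
    rw [show (1:ℤ)+1 = 2 by ring, show N+1-1 = N by ring]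
    abel
  · rcases (by omega : C2 = 1 ∨ 2 ≤ C2) with hC1 | hC1
    · subst hC1
      rw [show N+1-(1:ℤ) = 0 by omega]
      simp [show N = 0 by omega]
    · rw [show N+1-C2 = C2-1 by omega]
      rw [hpop_left (fun k => ∑ j ∈ Finset.Icc k (N+1-k), f j) 1 (C2-1) (by omega)]
      rw [hpop_right (fun k => ∑ j ∈ Finset.Icc k (N+1-k), f j) 2 C2 (by omega)]
      rw [show (1:ℤ)+1 = 2 by ring, show N+1-1 = N by ring,
        show Finset.Icc C2 (N+1-C2) = ∅ by apply Finset.Icc_eq_empty; omega]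
      simp
end CL


noncomputable def EE (R : Type*) [Zero R] [One R] {Y : Type*} [AddCommGroup Y] (lv ca : Y) (r : ℤ) :
    Y →₀ R := Finsupp.single (lv + r • ca) 1

lemma EE_sub (R : Type*) [Zero R] [One R] {Y : Type*} [AddCommGroup Y] (lv ca : Y) (r b : ℤ) :
    Finsupp.single (lv + r • ca - b • ca) (1:R) = EE R lv ca (r - b) := by
  unfold EE; congr 1; rw [sub_smul, add_sub_assoc]

lemma EE_add (R : Type*) [Zero R] [One R] {Y : Type*} [AddCommGroup Y] (lv ca : Y) (r b : ℤ) :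
    Finsupp.single (lv + r • ca + b • ca) (1:R) = EE R lv ca (r + b) := by
  unfold EE; congr 1; rw [add_smul, add_assoc]

set_option maxHeartbeats 2000000 in
/-- The metaplectic Demazure–Lusztig operator T̃_a on ℤ_{τ,𝔤}[Y], acting on
the basis by the explicit Chinta–Gunnells–Puskás formulas, satisfies the Hecke quadratic
relation T̃_a² = (τ²−1)T̃_a + τ², i.e. (T̃_a − τ²)(T̃_a + 1) = 0.
Here: `R` is the generic ring with parameters τ and Gauss sums g = 𝔤 (with 𝔤₀ = −1,
𝔤_k depending only on k mod n, and 𝔤_k 𝔤_{−k} = τ² for k ≢ 0 mod n); `Y` is the coweight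
lattice; `p λ̌ = ⟨λ̌, a⟩` for the simple root a with coroot `ca = ǎ` (⟨ǎ,a⟩ = 2) and
`ρ = ρ̌` (⟨ρ̌,a⟩ = 1); `m = n(ǎ)` is the least positive integer with n ∣ m·Q(ǎ), where
`qa = Q(ǎ)`; the dot action is λ̌ • s_a = λ̌ − ⟨λ̌+ρ̌,a⟩ǎ. -/
theorem stmt_14
    (R : Type*) [CommRing R] (n : ℕ) (τ : R) (g : ℤ → R)
    (hg0 : g 0 = -1)
    (hgper : ∀ k l : ℤ, (n : ℤ) ∣ (k - l) → g k = g l)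
    (hginv : ∀ k : ℤ, ¬ (n : ℤ) ∣ k → g k * g (-k) = τ ^ 2)
    (Y : Type*) [AddCommGroup Y]
    (p : Y →+ ℤ)
    (ca : Y) (hca : p ca = 2)
    (ρ : Y) (hρ : p ρ = 1)
    (m : ℕ) (qa : ℤ)
    (hm : IsLeast {m' : ℕ | 0 < m' ∧ (n : ℤ) ∣ (m' : ℤ) * qa} m)
    (T : (Y →₀ R) →ₗ[R] (Y →₀ R))
    (hTpos : ∀ lv : Y, 0 ≤ p lv →
      T (single lv 1) =
        g (p (lv + ρ) * qa) • single (lv - p (lv + ρ) • ca) 1 +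
        (τ ^ 2 - 1) •
          ∑ k ∈ (Finset.Icc (0 : ℤ) (p lv)).filter (fun k => k * (m : ℤ) ≤ p lv),
            single (lv - (k * (m : ℤ)) • ca) 1)
    (hTneg : ∀ lv : Y, p lv < 0 →
      T (single lv 1) =
        g (p (lv + ρ) * qa) • single (lv - p (lv + ρ) • ca) 1 +
        (1 - τ ^ 2) •
          ∑ k ∈ (Finset.Icc (0 : ℤ) (-(p lv))).filter
              (fun k => 0 < k ∧ k * (m : ℤ) < -(p lv)),
            single (lv + (k * (m : ℤ)) • ca) 1) :
    ∀ v : Y →₀ R, T (T v) = (τ ^ 2 - 1) • T v + τ ^ 2 • v := by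
  obtain ⟨⟨hm0, hnm⟩, hmin⟩ := hm
  have hm0' : (0:ℤ) < (m:ℤ) := by exact_mod_cast hm0
  have hmne : ((m:ℤ)) ≠ 0 := ne_of_gt hm0'
  have hm1 : (1:ℤ) ≤ (m:ℤ) := hm0'
  have hdiv : ∀ v k : ℤ, k ≤ v / (m:ℤ) ↔ k * m ≤ v := fun v k => Int.le_ediv_iff_mul_le hm0'
  have hdiv2 : ∀ v k : ℤ, k ≤ v / (2*(m:ℤ)) ↔ k * (2*m) ≤ v :=
    fun v k => Int.le_ediv_iff_mul_le (by positivity)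
  have hmdvd : ∀ s : ℤ, (n:ℤ) ∣ s * qa ↔ (m:ℤ) ∣ s := by
    intro s
    constructor
    · intro h
      rcases eq_or_ne (s % (m:ℤ)) 0 with h9 | h9
      · exact Int.dvd_of_emod_eq_zero h9
      · exfalso
        have h5 : (0:ℤ) ≤ s % m := Int.emod_nonneg s hmne
        have h6 : s % (m:ℤ) < m := Int.emod_lt_of_pos s hm0'
        have h7 : (s % (m:ℤ)) * qa = s * qa - (s / m) * ((m:ℤ) * qa) := by
          rw [Int.emod_def]; ring
        have h8 : (n:ℤ) ∣ (s % (m:ℤ)) * qa := by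
          rw [h7]; exact dvd_sub h (Dvd.dvd.mul_left hnm _)
        have hrz : (((s % (m:ℤ)).toNat : ℤ)) = s % m := Int.toNat_of_nonneg h5
        have hmem : (s % (m:ℤ)).toNat ∈ {m' : ℕ | 0 < m' ∧ (n : ℤ) ∣ (m' : ℤ) * qa} := by
          constructor
          · omega
          · rw [hrz]; exact h8
        have := hmin hmem
        omega
    · rintro ⟨u, hu⟩
      have h : s * qa = u * ((m:ℤ) * qa) := by rw [hu]; ring
      rw [h]; exact Dvd.dvd.mul_left hnm u
  have hgm : ∀ s u : ℤ, g ((s + u * m) * qa) = g (s * qa) := by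
    intro s u
    apply hgper
    have h : (s + u * (m:ℤ)) * qa - s * qa = u * ((m:ℤ) * qa) := by ring
    rw [h]; exact Dvd.dvd.mul_left hnm u
  suffices key : ∀ lv : Y, T (T (single lv 1)) =
      (τ^2 - 1) • T (single lv 1) + τ^2 • single lv 1 by
    intro v
    induction v using Finsupp.induction_linear with
    | zero => simp
    | add f1 f2 hf1 hf2 =>
        simp only [map_add, smul_add]
        rw [hf1, hf2]
        abel
    | single a b =>
        have hb : (single a b : Y →₀ R) = b • single a (1:R) := by
          rw [Finsupp.smul_single', mul_one]
        rw [hb, map_smul, map_smul, key a]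
        module
  intro lv
  have hE0 : (single lv (1:R) : Y →₀ R) = EE R lv ca 0 := by
    unfold EE; rw [zero_smul, add_zero]
  rw [hE0]
  have hpe : ∀ r : ℤ, p (lv + r • ca) = p lv + 2*r := by
    intro r; rw [map_add, map_zsmul, hca, smul_eq_mul]; ring
  set t := p lv with htdef
  have hpeρ : ∀ r : ℤ, p (lv + r • ca + ρ) = t + 2*r + 1 := by
    intro r; rw [map_add, hpe, hρ]
  have TposE : ∀ r : ℤ, 0 ≤ t + 2*r →
      T (EE R lv ca r) = g ((t + 2*r + 1) * qa) • EE R lv ca (r - (t + 2*r + 1)) +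
        (τ^2 - 1) • ∑ k ∈ Finset.Icc 0 ((t + 2*r)/(m:ℤ)), EE R lv ca (r - k * m) := by
    intro r hr
    have h := hTpos (lv + r • ca) (by rw [hpe]; exact hr)
    rw [hpeρ, hpe] at h
    have hset : (Finset.Icc (0:ℤ) (t+2*r)).filter (fun k => k * (m:ℤ) ≤ t+2*r)
        = Finset.Icc 0 ((t+2*r)/(m:ℤ)) := by
      ext k
      simp only [Finset.mem_filter, Finset.mem_Icc]
      constructor
      · rintro ⟨⟨hk0, _⟩, hkm⟩
        exact ⟨hk0, (hdiv _ _).mpr hkm⟩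
      · rintro ⟨hk0, hk1⟩
        have hkm := (hdiv _ _).mp hk1
        have hkk : k ≤ k * m := le_mul_of_one_le_right hk0 hm1
        exact ⟨⟨hk0, by omega⟩, hkm⟩
    rw [hset] at h
    simp only [EE_sub] at h
    exact h
  have TnegE : ∀ r : ℤ, t + 2*r < 0 →
      T (EE R lv ca r) = g ((t + 2*r + 1) * qa) • EE R lv ca (r - (t + 2*r + 1)) +
        (1 - τ^2) • ∑ k ∈ Finset.Icc 1 ((-(t + 2*r) - 1)/(m:ℤ)), EE R lv ca (r + k * m) := by
    intro r hr
    have h := hTneg (lv + r • ca) (by rw [hpe]; exact hr)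
    rw [hpeρ, hpe] at h
    have hset : (Finset.Icc (0:ℤ) (-(t+2*r))).filter
          (fun k => 0 < k ∧ k * (m:ℤ) < -(t+2*r))
        = Finset.Icc 1 ((-(t+2*r) - 1)/(m:ℤ)) := by
      ext k
      simp only [Finset.mem_filter, Finset.mem_Icc]
      constructor
      · rintro ⟨⟨hk0, _⟩, hk1, hkm⟩
        exact ⟨hk1, (hdiv _ _).mpr (by omega)⟩
      · rintro ⟨hk1, hk2⟩
        have hkm := (hdiv _ _).mp hk2
        have hkk : k ≤ k * m := le_mul_of_one_le_right (by omega) hm1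
        exact ⟨⟨by omega, by omega⟩, by omega, by omega⟩
    rw [hset] at h
    simp only [EE_sub, EE_add] at h
    exact h
  clear hTpos hTneg
  rcases le_or_gt 0 t with ht | ht
  · -- CASE t ≥ 0
    set K := t / (m:ℤ) with hKdef
    set C := t / (2*(m:ℤ)) with hCdef
    have hK : ∀ k : ℤ, k ≤ K ↔ k * m ≤ t := fun k => hdiv t k
    have hC : ∀ k : ℤ, k ≤ C ↔ k * (2*m) ≤ t := fun k => hdiv2 t k
    have hK0 : 0 ≤ K := (hK 0).mpr (by rw [zero_mul]; omega)
    have hC0 : 0 ≤ C := (hC 0).mpr (by rw [zero_mul]; omega)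
    have hKm : K * (m:ℤ) ≤ t := (hK K).mp le_rfl
    have hKm' : t < (K+1) * m := by
      by_contra hcon; push_neg at hcon
      have := (hK (K+1)).mpr hcon; omega
    have hCm : C * (2*(m:ℤ)) ≤ t := (hC C).mp le_rfl
    have hCm' : t < (C+1) * (2*(m:ℤ)) := by
      by_contra hcon; push_neg at hcon
      have := (hC (C+1)).mpr hcon; omega
    have hCK1 : 2*C ≤ K := by
      apply (hK _).mpr
      have e : 2*C * (m:ℤ) = C * (2*m) := by ring
      linarith
    have hCK2 : K ≤ 2*C + 1 := by
      by_contra hcon; push_neg at hcon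
      have h1 : (2*C+2) * (m:ℤ) ≤ K * m :=
        mul_le_mul_of_nonneg_right (by omega) (by positivity)
      have e : (C+1)*(2*(m:ℤ)) = (2*C+2)*m := by ring
      linarith
    have hfloor : (-t-1)/(m:ℤ) = -(K+1) := by
      have h1 : ¬ (-K ≤ (-t-1)/(m:ℤ)) := by
        intro hcon
        have h2 := (hdiv (-t-1) (-K)).mp hcon
        have e : (-K) * (m:ℤ) = -(K * m) := by ring
        linarith
      have h2 : -(K+1) ≤ (-t-1)/(m:ℤ) := by
        apply (hdiv _ _).mpr
        have e : (-(K+1)) * (m:ℤ) = -((K+1)*m) := by ring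
        linarith
      omega
    have hTe0 : T (EE R lv ca 0) = g ((t+1)*qa) • EE R lv ca (-(t+1)) +
        (τ^2-1) • ∑ k ∈ Finset.Icc 0 K, EE R lv ca (-(k*(m:ℤ))) := by
      have h := TposE 0 (by omega)
      simp only [zero_sub] at h
      rw [show t+2*0+1 = t+1 by ring, show t+2*0 = t by ring] at h
      exact h
    have hTes : T (EE R lv ca (-(t+1))) = g (-((t+1)*qa)) • EE R lv ca 0 +
        (1-τ^2) • ∑ i ∈ Finset.Icc 1 ((t+1)/(m:ℤ)), EE R lv ca (-(t+1) + i*(m:ℤ)) := by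
      have h := TnegE (-(t+1)) (by omega)
      rw [show t + 2*(-(t+1)) + 1 = -(t+1) by ring] at h
      rw [show (-(t+1):ℤ)*qa = -((t+1)*qa) by ring] at h
      rw [show -(t+1) - -(t+1) = (0:ℤ) by ring] at h
      rw [show -(t + 2*(-(t+1))) - 1 = t+1 by ring] at h
      exact h
    have h2 : ∀ k ∈ Finset.Icc (0:ℤ) C, T (EE R lv ca (-(k*(m:ℤ)))) =
        g ((t+1)*qa) • EE R lv ca (-(t+1) + k*(m:ℤ)) +
          (τ^2-1) • ∑ j ∈ Finset.Icc k (K-k), EE R lv ca (-(j*(m:ℤ))) := by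
      intro k hk
      rw [Finset.mem_Icc] at hk
      have hk2 : k * (2*(m:ℤ)) ≤ t := (hC k).mp hk.2
      have hkm2 : 2*(k*(m:ℤ)) ≤ t := by
        have e : k*(2*(m:ℤ)) = 2*(k*m) := by ring
        linarith
      have h := TposE (-(k*m)) (by linarith)
      rw [show t + 2*(-(k*(m:ℤ))) + 1 = (t+1) + (-(2*k))*m by ring,
        hgm (t+1) (-(2*k)),
        show -(k*(m:ℤ)) - ((t+1) + (-(2*k))*m) = -(t+1) + k*m by ring] at h
      rw [show t + 2*(-(k*(m:ℤ))) = t + (-(2*k))*m by ring,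
        Int.add_mul_ediv_right t (-(2*k)) hmne, ← hKdef] at h
      rw [h]
      congr 1
      congr 1
      calc ∑ i ∈ Finset.Icc 0 (K + -(2*k)), EE R lv ca (-(k*(m:ℤ)) - i*(m:ℤ))
          = ∑ i ∈ Finset.Icc 0 (K + -(2*k)),
              (fun j => EE R lv ca (-(j*(m:ℤ)))) (i + k) :=
            Finset.sum_congr rfl fun i _ => by simp only; congr 1; ring
        _ = ∑ j ∈ Finset.Icc (0+k) ((K + -(2*k))+k), EE R lv ca (-(j*(m:ℤ))) :=
            by exact hshift (fun j => EE R lv ca (-(j*(m:ℤ)))) 0 (K + -(2*k)) k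
        _ = ∑ j ∈ Finset.Icc k (K-k), EE R lv ca (-(j*(m:ℤ))) := by
            refine Finset.sum_congr ?_ fun j _ => rfl
            have e1 : (0:ℤ)+k = k := by ring
            have e2 : K + -(2*k) + k = K - k := by ring
            rw [e1, e2]
    have h3 : ∀ k ∈ Finset.Icc (C+1) K, T (EE R lv ca (-(k*(m:ℤ)))) =
        g ((t+1)*qa) • EE R lv ca (-(t+1) + k*(m:ℤ)) +
          (1-τ^2) • ∑ j ∈ Finset.Icc (K+1-k) (k-1), EE R lv ca (-(j*(m:ℤ))) := by
      intro k hk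
      rw [Finset.mem_Icc] at hk
      have hnk : ¬ (k*(2*(m:ℤ)) ≤ t) := fun hcon => by
        have := (hC k).mpr hcon; omega
      have hkm2 : t < 2*(k*(m:ℤ)) := by
        have e : k*(2*(m:ℤ)) = 2*(k*m) := by ring
        push_neg at hnk
        linarith
      have h := TnegE (-(k*m)) (by linarith)
      rw [show t + 2*(-(k*(m:ℤ))) + 1 = (t+1) + (-(2*k))*m by ring,
        hgm (t+1) (-(2*k)),
        show -(k*(m:ℤ)) - ((t+1) + (-(2*k))*m) = -(t+1) + k*m by ring] at h
      rw [show -(t + 2*(-(k*(m:ℤ)))) - 1 = (-t-1) + (2*k)*m by ring,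
        Int.add_mul_ediv_right _ _ hmne, hfloor] at h
      rw [h]
      congr 1
      congr 1
      calc ∑ i ∈ Finset.Icc 1 (-(K+1)+2*k), EE R lv ca (-(k*(m:ℤ)) + i*(m:ℤ))
          = ∑ i ∈ Finset.Icc 1 (-(K+1)+2*k),
              (fun j => EE R lv ca (-(j*(m:ℤ)))) (k - i) :=
            Finset.sum_congr rfl fun i _ => by simp only; congr 1; ring
        _ = ∑ j ∈ Finset.Icc (k - (-(K+1)+2*k)) (k - 1), EE R lv ca (-(j*(m:ℤ))) :=
            by exact hrefl (fun j => EE R lv ca (-(j*(m:ℤ)))) 1 (-(K+1)+2*k) k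
        _ = ∑ j ∈ Finset.Icc (K+1-k) (k-1), EE R lv ca (-(j*(m:ℤ))) := by
            refine Finset.sum_congr ?_ fun j _ => rfl
            have e1 : k - (-(K+1)+2*k) = K+1-k := by ring
            rw [e1]
    rw [hTe0, map_add, map_smul, map_smul, map_sum]
    rw [hsplit (fun k => T (EE R lv ca (-(k*(m:ℤ))))) 0 C K (by omega) (by omega)]
    rw [Finset.sum_congr rfl h2, Finset.sum_congr rfl h3]
    rw [hTes]
    rw [Finset.sum_add_distrib, Finset.sum_add_distrib]
    rw [← Finset.smul_sum, ← Finset.smul_sum, ← Finset.smul_sum, ← Finset.smul_sum]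
    have hCL := CL1 (fun j => EE R lv ca (-(j*(m:ℤ)))) K C hC0 hCK1 hCK2
    beta_reduce at hCL
    have hsum0K : ∑ k ∈ Finset.Icc 0 K, EE R lv ca (-(t+1) + k*(m:ℤ)) =
        EE R lv ca (-(t+1)) + ∑ k ∈ Finset.Icc 1 K, EE R lv ca (-(t+1) + k*(m:ℤ)) := by
      rw [hpop_left (fun k => EE R lv ca (-(t+1) + k*(m:ℤ))) 0 K hK0]
      rw [show -(t+1) + 0*(m:ℤ) = -(t+1) by ring, show (0:ℤ)+1 = 1 by ring]
    have hsplit2 : ∑ k ∈ Finset.Icc 0 C, EE R lv ca (-(t+1) + k*(m:ℤ)) +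
          ∑ k ∈ Finset.Icc (C+1) K, EE R lv ca (-(t+1) + k*(m:ℤ)) =
        ∑ k ∈ Finset.Icc 0 K, EE R lv ca (-(t+1) + k*(m:ℤ)) :=
      (hsplit (fun k => EE R lv ca (-(t+1) + k*(m:ℤ))) 0 C K (by omega) (by omega)).symm
    by_cases hdvd : (m:ℤ) ∣ (t+1)
    · -- m divides t+1
      obtain ⟨D, hD⟩ := hdvd
      have hKD : K = D - 1 := by
        have ha : D - 1 ≤ K := by
          apply (hK _).mpr
          have e : (D-1)*(m:ℤ) = m*D - m := by ring
          linarith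
        have hb : ¬ (D ≤ K) := by
          intro hcon
          have h1 : D*(m:ℤ) ≤ K*m := mul_le_mul_of_nonneg_right hcon (by positivity)
          have e : D*(m:ℤ) = m*D := by ring
          linarith
        omega
      have hK'1 : (t+1)/(m:ℤ) = K+1 := by
        rw [hD, Int.mul_ediv_cancel_left D hmne]; omega
      have hGm1 : g ((t+1)*qa) = -1 := by
        rw [hgper ((t+1)*qa) 0 (by
          rw [sub_zero]
          exact (hmdvd (t+1)).mpr ⟨D, hD⟩), hg0]
      have hGm2 : g (-((t+1)*qa)) = -1 := by
        rw [hgper (-((t+1)*qa)) 0 (by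
          rw [sub_zero]
          exact dvd_neg.mpr ((hmdvd (t+1)).mpr ⟨D, hD⟩)), hg0]
      have hS1' : ∑ i ∈ Finset.Icc 1 ((t+1)/(m:ℤ)), EE R lv ca (-(t+1) + i*(m:ℤ)) =
          (∑ i ∈ Finset.Icc 1 K, EE R lv ca (-(t+1) + i*(m:ℤ))) + EE R lv ca 0 := by
        rw [hK'1]
        rw [hpop_right (fun k => EE R lv ca (-(t+1) + k*(m:ℤ))) 1 (K+1) (by omega)]
        rw [show K+1-1 = K by ring]
        congr 1
        have e : -(t+1) + (K+1)*(m:ℤ) = 0 := by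
          have e2 : (K+1)*(m:ℤ) = m*D := by rw [show K+1 = D by omega]; ring
          linarith
        rw [e]
      have hEs : EE R lv ca (-(t+1)) =
          (∑ k ∈ Finset.Icc 0 C, EE R lv ca (-(t+1) + k*(m:ℤ)) +
            ∑ k ∈ Finset.Icc (C+1) K, EE R lv ca (-(t+1) + k*(m:ℤ))) -
          ∑ i ∈ Finset.Icc 1 K, EE R lv ca (-(t+1) + i*(m:ℤ)) := by
        rw [hsplit2, hsum0K]; abel
      have hSD : ∑ j ∈ Finset.Icc 0 K, EE R lv ca (-(j*(m:ℤ))) =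
          (∑ k ∈ Finset.Icc 0 C, ∑ j ∈ Finset.Icc k (K-k), EE R lv ca (-(j*(m:ℤ)))) -
          ∑ k ∈ Finset.Icc (C+1) K, ∑ j ∈ Finset.Icc (K+1-k) (k-1), EE R lv ca (-(j*(m:ℤ))) :=
        hCL.symm
      rw [hGm1, hGm2, hS1', hEs, hSD]
      module
    · -- m does not divide t+1
      have hKK' : (t+1)/(m:ℤ) = K := by
        have ha : K ≤ (t+1)/(m:ℤ) := (hdiv _ _).mpr (by linarith)
        have hb : (t+1)/(m:ℤ) ≤ K := by
          apply (hK _).mpr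
          have h1 : ((t+1)/(m:ℤ))*m ≤ t+1 := (hdiv (t+1) _).mp le_rfl
          have h2 : ((t+1)/(m:ℤ))*m ≠ t+1 := by
            intro hcon
            exact hdvd ⟨(t+1)/(m:ℤ), by linarith⟩
          have h4 : ((t+1)/(m:ℤ))*(m:ℤ) < t+1 := lt_of_le_of_ne h1 h2
          have h5 := Int.lt_iff_add_one_le.mp h4
          linarith
        omega
      have hτ : g ((t+1)*qa) * g (-((t+1)*qa)) = τ^2 :=
        hginv _ (fun hcon => hdvd ((hmdvd (t+1)).mp hcon))
      have hEs : EE R lv ca (-(t+1)) =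
          (∑ k ∈ Finset.Icc 0 C, EE R lv ca (-(t+1) + k*(m:ℤ)) +
            ∑ k ∈ Finset.Icc (C+1) K, EE R lv ca (-(t+1) + k*(m:ℤ))) -
          ∑ i ∈ Finset.Icc 1 K, EE R lv ca (-(t+1) + i*(m:ℤ)) := by
        rw [hsplit2, hsum0K]; abel
      have hSD : ∑ j ∈ Finset.Icc 0 K, EE R lv ca (-(j*(m:ℤ))) =
          (∑ k ∈ Finset.Icc 0 C, ∑ j ∈ Finset.Icc k (K-k), EE R lv ca (-(j*(m:ℤ)))) -
          ∑ k ∈ Finset.Icc (C+1) K, ∑ j ∈ Finset.Icc (K+1-k) (k-1), EE R lv ca (-(j*(m:ℤ))) :=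
        hCL.symm
      rw [hKK', smul_add, smul_smul, hτ, hEs, hSD]
      module
  · -- CASE t < 0
    rcases eq_or_lt_of_le (by omega : t ≤ -1) with hteq | ht2
    · -- t = -1
      have h := TnegE 0 (by omega)
      rw [show t+2*0+1 = 0 by omega] at h
      rw [show ((0:ℤ))*qa = 0 by ring, hg0] at h
      rw [show (0:ℤ) - 0 = 0 by ring] at h
      rw [show -(t+2*0) - 1 = 0 by omega, Int.zero_ediv] at h
      rw [show Finset.Icc (1:ℤ) 0 = ∅ by apply Finset.Icc_eq_empty; omega] at h
      rw [Finset.sum_empty, smul_zero, add_zero] at h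
      rw [h, map_smul, h]
      module
    · -- t ≤ -2
      set N := (-t-1) / (m:ℤ) with hNdef
      set K2 := (-t-2) / (m:ℤ) with hK2def
      set C2 := -(t / (2*(m:ℤ))) with hC2def
      have hN : ∀ k : ℤ, k ≤ N ↔ k * m ≤ -t-1 := fun k => hdiv (-t-1) k
      have hC2c : ∀ k : ℤ, C2 ≤ k ↔ -t ≤ k*(2*(m:ℤ)) := by
        intro k
        rw [hC2def]
        constructor
        · intro hcon
          have h1 := (hdiv2 t (-k)).mp (by omega)
          have e : (-k)*(2*(m:ℤ)) = -(k*(2*m)) := by ring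
          linarith
        · intro hcon
          have h1 : (-k) ≤ t/(2*(m:ℤ)) := (hdiv2 t (-k)).mpr (by
            have e : (-k)*(2*(m:ℤ)) = -(k*(2*m)) := by ring
            linarith)
          omega
      have hN0 : 0 ≤ N := (hN 0).mpr (by rw [zero_mul]; omega)
      have hNm : N * (m:ℤ) ≤ -t-1 := (hN N).mp le_rfl
      have hNm' : -t-1 < (N+1)*(m:ℤ) := by
        by_contra hcon; push_neg at hcon
        have := (hN (N+1)).mpr hcon; omega
      have hC2a : -t ≤ C2*(2*(m:ℤ)) := (hC2c C2).mp le_rfl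
      have hC2b : (C2-1)*(2*(m:ℤ)) < -t := by
        by_contra hcon; push_neg at hcon
        have := (hC2c (C2-1)).mpr hcon; omega
      have hC2lb : N+1 ≤ 2*C2 := by
        by_contra hcon; push_neg at hcon
        have h1 : 2*C2*(m:ℤ) ≤ N*m :=
          mul_le_mul_of_nonneg_right (by omega) (by positivity)
        have e : C2*(2*(m:ℤ)) = 2*C2*m := by ring
        linarith
      have hC2ub : 2*C2 ≤ N+2 := by
        by_contra hcon; push_neg at hcon
        have h1 : (N+1)*(m:ℤ) ≤ (2*C2-2)*m :=
          mul_le_mul_of_nonneg_right (by omega) (by positivity)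
        have e : (C2-1)*(2*(m:ℤ)) = (2*C2-2)*m := by ring
        linarith
      have hfloor2 : t/(m:ℤ) = -(N+1) := by
        have h1 : ¬ (-N ≤ t/(m:ℤ)) := by
          intro hcon
          have h2 := (hdiv t (-N)).mp hcon
          have e : (-N)*(m:ℤ) = -(N*m) := by ring
          linarith
        have h2 : -(N+1) ≤ t/(m:ℤ) := by
          apply (hdiv _ _).mpr
          have e : (-(N+1))*(m:ℤ) = -((N+1)*m) := by ring
          linarith
        omega
      have hTe0 : T (EE R lv ca 0) = g ((t+1)*qa) • EE R lv ca (-(t+1)) +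
          (1-τ^2) • ∑ k ∈ Finset.Icc 1 N, EE R lv ca (k*(m:ℤ)) := by
        have h := TnegE 0 (by omega)
        rw [show t+2*0+1 = t+1 by ring] at h
        rw [show (0:ℤ) - (t+1) = -(t+1) by ring] at h
        rw [show -(t+2*0) - 1 = -t-1 by ring] at h
        simp only [zero_add] at h
        exact h
      have hTes : T (EE R lv ca (-(t+1))) = g (-((t+1)*qa)) • EE R lv ca 0 +
          (τ^2-1) • ∑ i ∈ Finset.Icc 0 K2, EE R lv ca (-(t+1) - i*(m:ℤ)) := by
        have h := TposE (-(t+1)) (by omega)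
        rw [show t + 2*(-(t+1)) + 1 = -(t+1) by ring] at h
        rw [show (-(t+1):ℤ)*qa = -((t+1)*qa) by ring] at h
        rw [show -(t+1) - -(t+1) = (0:ℤ) by ring] at h
        rw [show t + 2*(-(t+1)) = -t-2 by ring] at h
        exact h
      have h2 : ∀ k ∈ Finset.Icc C2 N, T (EE R lv ca (k*(m:ℤ))) =
          g ((t+1)*qa) • EE R lv ca (-(t+1) - k*(m:ℤ)) +
            (τ^2-1) • ∑ j ∈ Finset.Icc (N+1-k) k, EE R lv ca (j*(m:ℤ)) := by
        intro k hk
        rw [Finset.mem_Icc] at hk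
        have hge := (hC2c k).mp hk.1
        have hkm2 : -t ≤ 2*(k*(m:ℤ)) := by
          have e : k*(2*(m:ℤ)) = 2*(k*m) := by ring
          linarith
        have h := TposE (k*m) (by linarith)
        rw [show t + 2*(k*(m:ℤ)) + 1 = (t+1) + (2*k)*m by ring,
          hgm (t+1) (2*k),
          show k*(m:ℤ) - ((t+1) + (2*k)*m) = -(t+1) - k*m by ring] at h
        rw [show t + 2*(k*(m:ℤ)) = t + (2*k)*m by ring,
          Int.add_mul_ediv_right t (2*k) hmne, hfloor2] at h
        rw [h]
        congr 1
        congr 1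
        calc ∑ i ∈ Finset.Icc 0 (-(N+1)+2*k), EE R lv ca (k*(m:ℤ) - i*(m:ℤ))
            = ∑ i ∈ Finset.Icc 0 (-(N+1)+2*k),
                (fun j => EE R lv ca (j*(m:ℤ))) (k - i) :=
              Finset.sum_congr rfl fun i _ => by simp only; congr 1; ring
          _ = ∑ j ∈ Finset.Icc (k - (-(N+1)+2*k)) (k - 0), EE R lv ca (j*(m:ℤ)) :=
              by exact hrefl (fun j => EE R lv ca (j*(m:ℤ))) 0 (-(N+1)+2*k) k
          _ = ∑ j ∈ Finset.Icc (N+1-k) k, EE R lv ca (j*(m:ℤ)) := by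
              refine Finset.sum_congr ?_ fun j _ => rfl
              have e1 : k - (-(N+1)+2*k) = N+1-k := by ring
              have e2 : k - 0 = k := by ring
              rw [e1, e2]
      have h3 : ∀ k ∈ Finset.Icc 1 (C2-1), T (EE R lv ca (k*(m:ℤ))) =
          g ((t+1)*qa) • EE R lv ca (-(t+1) - k*(m:ℤ)) +
            (1-τ^2) • ∑ j ∈ Finset.Icc (k+1) (N-k), EE R lv ca (j*(m:ℤ)) := by
        intro k hk
        rw [Finset.mem_Icc] at hk
        have hlt : ¬ (C2 ≤ k) := by omega
        have h1 : ¬ (-t ≤ k*(2*(m:ℤ))) := fun hcon => hlt ((hC2c k).mpr hcon)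
        have hkm2 : 2*(k*(m:ℤ)) < -t := by
          have e : k*(2*(m:ℤ)) = 2*(k*m) := by ring
          push_neg at h1
          linarith
        have h := TnegE (k*m) (by linarith)
        rw [show t + 2*(k*(m:ℤ)) + 1 = (t+1) + (2*k)*m by ring,
          hgm (t+1) (2*k),
          show k*(m:ℤ) - ((t+1) + (2*k)*m) = -(t+1) - k*m by ring] at h
        rw [show -(t + 2*(k*(m:ℤ))) - 1 = (-t-1) + (-(2*k))*m by ring,
          Int.add_mul_ediv_right _ _ hmne, ← hNdef] at h
        rw [h]
        congr 1
        congr 1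
        calc ∑ i ∈ Finset.Icc 1 (N + -(2*k)), EE R lv ca (k*(m:ℤ) + i*(m:ℤ))
            = ∑ i ∈ Finset.Icc 1 (N + -(2*k)),
                (fun j => EE R lv ca (j*(m:ℤ))) (i + k) :=
              Finset.sum_congr rfl fun i _ => by simp only; congr 1; ring
          _ = ∑ j ∈ Finset.Icc (1+k) ((N + -(2*k))+k), EE R lv ca (j*(m:ℤ)) :=
              by exact hshift (fun j => EE R lv ca (j*(m:ℤ))) 1 (N + -(2*k)) k
          _ = ∑ j ∈ Finset.Icc (k+1) (N-k), EE R lv ca (j*(m:ℤ)) := by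
              refine Finset.sum_congr ?_ fun j _ => rfl
              have e1 : (1:ℤ)+k = k+1 := by ring
              have e2 : N + -(2*k) + k = N - k := by ring
              rw [e1, e2]
      rw [hTe0, map_add, map_smul, map_smul, map_sum]
      rw [hsplit (fun k => T (EE R lv ca (k*(m:ℤ)))) 1 (C2-1) N (by omega) (by omega)]
      rw [show C2-1+1 = C2 by ring]
      rw [Finset.sum_congr rfl h3, Finset.sum_congr rfl h2]
      rw [hTes]
      rw [Finset.sum_add_distrib, Finset.sum_add_distrib]
      rw [← Finset.smul_sum, ← Finset.smul_sum, ← Finset.smul_sum, ← Finset.smul_sum]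
      have hCL := CL2 (fun j => EE R lv ca (j*(m:ℤ))) N C2 hN0 hC2lb hC2ub
      beta_reduce at hCL
      have hsum0N : ∑ i ∈ Finset.Icc 0 N, EE R lv ca (-(t+1) - i*(m:ℤ)) =
          EE R lv ca (-(t+1)) + ∑ i ∈ Finset.Icc 1 N, EE R lv ca (-(t+1) - i*(m:ℤ)) := by
        rw [hpop_left (fun k => EE R lv ca (-(t+1) - k*(m:ℤ))) 0 N hN0]
        rw [show -(t+1) - 0*(m:ℤ) = -(t+1) by ring, show (0:ℤ)+1 = 1 by ring]
      have hsplit2 : ∑ k ∈ Finset.Icc 1 (C2-1), EE R lv ca (-(t+1) - k*(m:ℤ)) +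
            ∑ k ∈ Finset.Icc C2 N, EE R lv ca (-(t+1) - k*(m:ℤ)) =
          ∑ k ∈ Finset.Icc 1 N, EE R lv ca (-(t+1) - k*(m:ℤ)) := by
        have h := hsplit (fun k => EE R lv ca (-(t+1) - k*(m:ℤ))) 1 (C2-1) N
          (by omega) (by omega)
        rw [show C2-1+1 = C2 by ring] at h
        exact h.symm
      have hST : ∑ j ∈ Finset.Icc 1 N, EE R lv ca (j*(m:ℤ)) =
          (∑ k ∈ Finset.Icc C2 N, ∑ j ∈ Finset.Icc (N+1-k) k, EE R lv ca (j*(m:ℤ))) -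
          ∑ k ∈ Finset.Icc 1 (C2-1), ∑ j ∈ Finset.Icc (k+1) (N-k), EE R lv ca (j*(m:ℤ)) :=
        hCL.symm
      by_cases hdvd : (m:ℤ) ∣ (t+1)
      · -- m divides t+1
        obtain ⟨D0, hD0⟩ := hdvd
        have hND : N = -D0 := by
          have ha : -D0 ≤ N := by
            apply (hN _).mpr
            have e : (-D0)*(m:ℤ) = -(m*D0) := by ring
            linarith
          have hb : ¬ (-D0+1 ≤ N) := by
            intro hcon
            have h1 : (-D0+1)*(m:ℤ) ≤ N*m :=
              mul_le_mul_of_nonneg_right hcon (by positivity)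
            have e : (-D0+1)*(m:ℤ) = -(m*D0) + m := by ring
            linarith
          omega
        have hK2N : K2 = N - 1 := by
          have ha : N - 1 ≤ K2 := by
            apply (hdiv _ _).mpr
            have e : (N-1)*(m:ℤ) = N*m - m := by ring
            linarith
          have hb : ¬ (N ≤ K2) := by
            intro hcon
            have h1 := (hdiv (-t-2) N).mp hcon
            have e2 : N*(m:ℤ) = -(m*D0) := by
              rw [hND]; ring
            linarith
          omega
        have hGm1 : g ((t+1)*qa) = -1 := by
          rw [hgper ((t+1)*qa) 0 (by
            rw [sub_zero]
            exact (hmdvd (t+1)).mpr ⟨D0, hD0⟩), hg0]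
        have hGm2 : g (-((t+1)*qa)) = -1 := by
          rw [hgper (-((t+1)*qa)) 0 (by
            rw [sub_zero]
            exact dvd_neg.mpr ((hmdvd (t+1)).mpr ⟨D0, hD0⟩)), hg0]
        have hN1 : 1 ≤ N := by
          have hD0neg : D0 ≤ -1 := by
            by_contra hcon
            push_neg at hcon
            have hnn : 0 ≤ (m:ℤ)*D0 := mul_nonneg (by positivity) (by omega)
            linarith
          omega
        have hSA : ∑ i ∈ Finset.Icc 0 K2, EE R lv ca (-(t+1) - i*(m:ℤ)) =
            EE R lv ca (-(t+1)) +
              ∑ i ∈ Finset.Icc 1 (N-1), EE R lv ca (-(t+1) - i*(m:ℤ)) := by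
          rw [hK2N]
          rw [hpop_left (fun k => EE R lv ca (-(t+1) - k*(m:ℤ))) 0 (N-1) (by omega)]
          rw [show -(t+1) - 0*(m:ℤ) = -(t+1) by ring, show (0:ℤ)+1 = 1 by ring]
        have hSB : ∑ i ∈ Finset.Icc 1 N, EE R lv ca (-(t+1) - i*(m:ℤ)) =
            (∑ i ∈ Finset.Icc 1 (N-1), EE R lv ca (-(t+1) - i*(m:ℤ))) + EE R lv ca 0 := by
          rw [hpop_right (fun k => EE R lv ca (-(t+1) - k*(m:ℤ))) 1 N hN1]
          congr 1
          have e : -(t+1) - N*(m:ℤ) = 0 := by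
            have e2 : N*(m:ℤ) = -(m*D0) := by rw [hND]; ring
            linarith
          rw [e]
        have hEs : EE R lv ca (-(t+1)) =
            (∑ i ∈ Finset.Icc 0 K2, EE R lv ca (-(t+1) - i*(m:ℤ))) -
            ((∑ k ∈ Finset.Icc 1 (C2-1), EE R lv ca (-(t+1) - k*(m:ℤ)) +
              ∑ k ∈ Finset.Icc C2 N, EE R lv ca (-(t+1) - k*(m:ℤ))) - EE R lv ca 0) := by
          rw [hsplit2, hSB, hSA]; abel
        rw [hGm1, hGm2, hEs, hST]
        module
      · -- m does not divide t+1
        have hK2N : K2 = N := by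
          have ha : K2 ≤ N := by
            apply (hN _).mpr
            have h1 : K2*(m:ℤ) ≤ -t-2 := (hdiv (-t-2) K2).mp le_rfl
            linarith
          have hb : N ≤ K2 := by
            apply (hdiv _ _).mpr
            have h2 : N*(m:ℤ) ≠ -t-1 := by
              intro hcon
              exact hdvd ⟨-N, by linarith⟩
            have h4 : N*(m:ℤ) < -t-1 := lt_of_le_of_ne hNm h2
            have h5 := Int.lt_iff_add_one_le.mp h4
            linarith
          omega
        have hτ : g ((t+1)*qa) * g (-((t+1)*qa)) = τ^2 :=
          hginv _ (fun hcon => hdvd ((hmdvd (t+1)).mp hcon))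
        have hEs : EE R lv ca (-(t+1)) =
            (∑ i ∈ Finset.Icc 0 K2, EE R lv ca (-(t+1) - i*(m:ℤ))) -
            (∑ k ∈ Finset.Icc 1 (C2-1), EE R lv ca (-(t+1) - k*(m:ℤ)) +
              ∑ k ∈ Finset.Icc C2 N, EE R lv ca (-(t+1) - k*(m:ℤ))) := by
          rw [hsplit2, hK2N, hsum0N]; abel
        rw [smul_add, smul_smul, hτ, hEs, hST]
        module
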